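/- Let A be an associative ring satisfying: for all x y ∈ A, if x*y = 0 and y*x = 0 then x = 0 or y = 0. Then for every n : ℕ and any two two-sided ideals I₁, I₂ of FreeRing (Fin n), the union of their algebraic sets equals the algebraic set of their intersection: V(I₁) ∪ V(I₂) = V(I₁ ⊓ I₂). -/
import Mathlib

theorem union_algebraic_sets_eq_algebraic_set_of_inf
    (A : Type*) [Ring A]
    (h : ∀ x y : A, x * y = 0 → y * x = 0 → x = 0 ∨ y = 0)
    (n : ℕ) (I₁ I₂ : TwoSidedIdeal (FreeRing (Fin n))) :
    ({v : Fin n → A | ∀ w ∈ I₁, FreeRing.lift v w = 0} ∪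
      {v : Fin n → A | ∀ w ∈ I₂, FreeRing.lift v w = 0}) =
      {v : Fin n → A | ∀ w ∈ I₁ ⊓ I₂, FreeRing.lift v w = 0} := by
  ext v
  simp only [Set.mem_union, Set.mem_setOf_eq]
  constructor
  · rintro (hv | hv) w hw
    · exact hv w hw.1
    · exact hv w hw.2
  · intro hv
    by_contra hc
    push_neg at hc
    obtain ⟨⟨a, ha, ha0⟩, ⟨b, hb, hb0⟩⟩ := hc
    have hab : a * b ∈ I₁ ⊓ I₂ :=
      ⟨I₁.mul_mem_right _ _ ha, I₂.mul_mem_left _ _ hb⟩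
    have hba : b * a ∈ I₁ ⊓ I₂ :=
      ⟨I₁.mul_mem_left _ _ ha, I₂.mul_mem_right _ _ hb⟩
    have h1 := hv _ hab
    have h2 := hv _ hba
    rw [map_mul] at h1 h2
    rcases h (FreeRing.lift v a) (FreeRing.lift v b) h1 h2 with h3 | h3
    · exact ha0 h3
    · exact hb0 h3
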